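/- Let t be a t-structure on a triangulated category C and P an object with Hom(P, X) = 0 for all X ∈ C_{t≤-1} ∪ C_{t≥1}. Then the functor Hom_C(P, -) restricted to the heart of t is an exact functor to abelian groups, and H⁰_t(P) is a projective object of the heart. -/

import Mathlib

open CategoryTheory CategoryTheory.Limits CategoryTheory.Pretriangulated ZeroObject

universe w' v u

variable (C : Type u) [Category.{v} C] [HasZeroObject C] [HasShift C ℤ]
  [Preadditive C] [∀ n : ℤ, (shiftFunctor C n).Additive] [Pretriangulated C]

/-- A t-structure `t = (C_{t≤0}, C_{t≥0})` on a triangulated category, in the homological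
convention of the paper.  `le` is the class `C_{t≤0}` and `ge` is the class `C_{t≥0}`.
The condition `C_{t≤0} ⊆ C_{t≤0}[1]` is encoded as `le X → le (X⟦-1⟧)` (the classes being
closed under isomorphism), and `C_{t≥0}[1] ⊆ C_{t≥0}` as `ge X → ge (X⟦1⟧)`.
The class `C_{t≤i} = C_{t≤0}[i]` is `fun X => le (X⟦-i⟧)` and similarly for `C_{t≥i}`. -/
structure PaperTStructure where
  /-- the class `C_{t≤0}` -/
  le : C → Prop
  /-- the class `C_{t≥0}` -/
  ge : C → Prop
  le_iso : ∀ {X Y : C}, (X ≅ Y) → le X → le Y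
  ge_iso : ∀ {X Y : C}, (X ≅ Y) → ge X → ge Y
  le_shift : ∀ X : C, le X → le (X⟦(-1 : ℤ)⟧)
  ge_shift : ∀ X : C, ge X → ge (X⟦(1 : ℤ)⟧)
  /-- `C_{t≥0}[1] ⊥ C_{t≤0}` -/
  orth : ∀ (X Y : C), ge X → le Y → ∀ f : X⟦(1 : ℤ)⟧ ⟶ Y, f = 0
  /-- every object `M` admits a `t`-decomposition `L → M → R → L[1]` with `L ∈ C_{t≥0}`,
  `R ∈ C_{t≤0}[-1]` (i.e. `R⟦1⟧ ∈ C_{t≤0}`) -/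
  decomp : ∀ M : C, ∃ (L R : C) (f : L ⟶ M) (g : M ⟶ R) (h : R ⟶ L⟦(1 : ℤ)⟧),
    (Triangle.mk f g h ∈ distTriang C) ∧ ge L ∧ le (R⟦(1 : ℤ)⟧)

/-- A weight structure `w = (C_{w≤0}, C_{w≥0})` on a triangulated category, in the homological
convention of the paper.  `le` is the class `C_{w≤0}` and `ge` is the class `C_{w≥0}`;
both are retraction-closed.  `C_{w≤i} = C_{w≤0}[i]` is `fun X => le (X⟦-i⟧)`, similarly `ge`. -/
structure PaperWeightStructure where
  /-- the class `C_{w≤0}` -/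
  le : C → Prop
  /-- the class `C_{w≥0}` -/
  ge : C → Prop
  le_retract : ∀ (X Y : C), le Y → (∃ (i : X ⟶ Y) (r : Y ⟶ X), i ≫ r = 𝟙 X) → le X
  ge_retract : ∀ (X Y : C), ge Y → (∃ (i : X ⟶ Y) (r : Y ⟶ X), i ≫ r = 𝟙 X) → ge X
  le_shift : ∀ X : C, le X → le (X⟦(-1 : ℤ)⟧)
  ge_shift : ∀ X : C, ge X → ge (X⟦(1 : ℤ)⟧)
  /-- `C_{w≤0} ⊥ C_{w≥0}[1]` -/
  orth : ∀ (X Y : C), le X → ge Y → ∀ f : X ⟶ Y⟦(1 : ℤ)⟧, f = 0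
  /-- every object `M` admits a weight decomposition `L → M → R → L[1]` with `L ∈ C_{w≤0}`,
  `R ∈ C_{w≥0}[1]` (i.e. `R⟦-1⟧ ∈ C_{w≥0}`) -/
  decomp : ∀ M : C, ∃ (L R : C) (f : L ⟶ M) (g : M ⟶ R) (h : R ⟶ L⟦(1 : ℤ)⟧),
    (Triangle.mk f g h ∈ distTriang C) ∧ le L ∧ ge (R⟦(-1 : ℤ)⟧)

/-- A class of objects is extension-closed if it contains `0` and for every distinguished
triangle `X → Y → Z → X[1]` with `X, Z` in the class, `Y` lies in the class. -/
def ExtClosed (P : C → Prop) : Prop :=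
  P (0 : C) ∧ ∀ T : Triangle C, (T ∈ distTriang C) → P T.obj₁ → P T.obj₃ → P T.obj₂

/-- A class of objects is retraction-closed if it contains all retracts of its elements. -/
def RetractClosed (P : C → Prop) : Prop :=
  ∀ X Y : C, P Y → (∃ (i : X ⟶ Y) (r : Y ⟶ X), i ≫ r = 𝟙 X) → P X

/-- let `t` be a t-structure and `P` an object with `Hom(P, X) = 0` for all
`X ∈ C_{t≤-1} ∪ C_{t≥1}`.  Then `Hom(P, -)` restricted to the heart `C_{t≤0} ∩ C_{t≥0}` is
an exact functor to abelian groups (short exact sequences in the heart correspond to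
distinguished triangles with all three objects in the heart), and `H⁰_t(P)` — characterized
as an object `P₀` of the heart with a morphism `π : P ⟶ P₀` inducing a bijection
`Hom(P₀, X) ≅ Hom(P, X)` for every `X` in the heart — is a projective object of the heart
(epimorphisms in the heart being the second morphisms of distinguished triangles with all
three objects in the heart). -/
theorem stmt17 (t : PaperTStructure C) (P : C)
    (hP : ∀ X : C, (t.le (X⟦(1 : ℤ)⟧) ∨ t.ge (X⟦(-1 : ℤ)⟧)) → ∀ f : P ⟶ X, f = 0) :
    (∀ (A B Z : C) (f : A ⟶ B) (g : B ⟶ Z) (h : Z ⟶ A⟦(1 : ℤ)⟧),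
      (Triangle.mk f g h ∈ distTriang C) →
      (t.le A ∧ t.ge A) → (t.le B ∧ t.ge B) → (t.le Z ∧ t.ge Z) →
      (∀ a : P ⟶ A, a ≫ f = 0 → a = 0) ∧
      (∀ b : P ⟶ B, b ≫ g = 0 → ∃ a : P ⟶ A, a ≫ f = b) ∧
      (∀ z : P ⟶ Z, ∃ b : P ⟶ B, b ≫ g = z)) ∧
    (∃ (P₀ : C) (π : P ⟶ P₀), (t.le P₀ ∧ t.ge P₀) ∧
      (∀ X : C, (t.le X ∧ t.ge X) →
        Function.Bijective (fun u : P₀ ⟶ X => π ≫ u)) ∧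
      (∀ (A B Z : C) (f : A ⟶ B) (g : B ⟶ Z) (h : Z ⟶ A⟦(1 : ℤ)⟧),
        (Triangle.mk f g h ∈ distTriang C) →
        (t.le A ∧ t.ge A) → (t.le B ∧ t.ge B) → (t.le Z ∧ t.ge Z) →
        ∀ φ : P₀ ⟶ Z, ∃ ψ : P₀ ⟶ B, ψ ≫ g = φ)) := by
  -- Hom(P, X⟦-1⟧) = 0 when X ∈ C_{t≤0}  (i.e. X⟦-1⟧ ∈ C_{t≤-1})
  have hPle : ∀ X : C, t.le X → ∀ u : P ⟶ X⟦(-1 : ℤ)⟧, u = 0 := by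
    intro X hX u
    exact hP _ (Or.inl (t.le_iso ((shiftFunctorCompIsoId C (-1 : ℤ) 1
      (by omega)).app X).symm hX)) u
  -- Hom(P, X⟦1⟧) = 0 when X ∈ C_{t≥0}  (i.e. X⟦1⟧ ∈ C_{t≥1})
  have hPge : ∀ X : C, t.ge X → ∀ u : P ⟶ X⟦(1 : ℤ)⟧, u = 0 := by
    intro X hX u
    exact hP _ (Or.inr (t.ge_iso ((shiftFunctorCompIsoId C (1 : ℤ) (-1)
      (by omega)).app X).symm hX)) u
  -- Hom(X⟦1⟧, Y) = 0 when X ∈ C_{t≥0}, Y ∈ C_{t≤0}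
  have horth := t.orth
  -- first part: exactness of Hom(P, -) on the heart
  have exact1 : ∀ (A B Z : C) (f : A ⟶ B) (g : B ⟶ Z) (h : Z ⟶ A⟦(1 : ℤ)⟧),
      (Triangle.mk f g h ∈ distTriang C) →
      (t.le A ∧ t.ge A) → (t.le B ∧ t.ge B) → (t.le Z ∧ t.ge Z) →
      (∀ a : P ⟶ A, a ≫ f = 0 → a = 0) ∧
      (∀ b : P ⟶ B, b ≫ g = 0 → ∃ a : P ⟶ A, a ≫ f = b) ∧
      (∀ z : P ⟶ Z, ∃ b : P ⟶ B, b ≫ g = z) := by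
    intro A B Z f g h hT hA hB hZ
    refine ⟨?_, ?_, ?_⟩
    · intro a ha
      obtain ⟨e, he⟩ := Triangle.coyoneda_exact₂ _
        (inv_rot_of_distTriang _ hT) (X := P) a ha
      have : e = 0 := hPle Z hZ.1 e
      rw [he, this, zero_comp]; rfl
    · intro b hb
      obtain ⟨a, ha⟩ := Triangle.coyoneda_exact₂ _ hT (X := P) b hb
      exact ⟨a, ha.symm⟩
    · intro z
      obtain ⟨b, hb⟩ := Triangle.coyoneda_exact₃ _ hT (X := P) z
        (hPge A hA.2 (z ≫ h))
      exact ⟨b, hb.symm⟩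
  refine ⟨exact1, ?_⟩
  -- construct P₀ = τ_{≤0} P : decompose P⟦-1⟧ and shift
  obtain ⟨L, R, f₁, g₁, h₁, hT₁, hL, hR⟩ := t.decomp (P⟦(-1 : ℤ)⟧)
  set T : Triangle C := Triangle.mk f₁ g₁ h₁ with hTdef
  have hT' : (CategoryTheory.shiftFunctor (Triangle C) (1 : ℤ)).obj T ∈ distTriang C :=
    Triangle.shift_distinguished T hT₁ 1
  set T' : Triangle C := (CategoryTheory.shiftFunctor (Triangle C) (1 : ℤ)).obj T with hT'def
  set e : P ≅ (P⟦(-1 : ℤ)⟧)⟦(1 : ℤ)⟧ :=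
    ((shiftFunctorCompIsoId C (-1 : ℤ) 1 (by omega)).app P).symm with hedef
  set π : P ⟶ R⟦(1 : ℤ)⟧ := e.hom ≫ T'.mor₂ with hπdef
  have hbij : ∀ X : C, (t.le X ∧ t.ge X) →
      Function.Bijective (fun u : R⟦(1 : ℤ)⟧ ⟶ X => π ≫ u) := by
    intro X hX
    have key : ∀ w : R⟦(1 : ℤ)⟧ ⟶ X, T'.mor₂ ≫ w = 0 → w = 0 := by
      intro w hw
      obtain ⟨q, hq⟩ := Triangle.yoneda_exact₃ T' hT' w hw
      have : q = 0 := horth _ _ (t.ge_shift _ hL) hX.1 q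
      rw [hq, this, comp_zero]; rfl
    constructor
    · intro u v huv
      have huv' : T'.mor₂ ≫ u = T'.mor₂ ≫ v := by
        have := e.inv ≫= huv
        exact (cancel_epi e.hom).1 ((Category.assoc e.hom T'.mor₂ u).symm.trans (huv.trans (Category.assoc e.hom T'.mor₂ v)))
      have := key (u - v) (by exact (Preadditive.comp_sub T'.mor₂ u v).trans (sub_eq_zero.2 huv'))
      rw [← sub_eq_zero]; exact this
    · intro v
      have h0 : T'.mor₁ ≫ (e.inv ≫ v) = 0 := horth _ _ hL hX.1 _
      obtain ⟨u, hu⟩ := Triangle.yoneda_exact₂ T' hT' (e.inv ≫ v) h0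
      refine ⟨u, ?_⟩
      show (e.hom ≫ T'.mor₂) ≫ u = v
      exact (Category.assoc e.hom T'.mor₂ u).trans ((congrArg (fun x => e.hom ≫ x) hu.symm).trans (e.hom_inv_id_assoc v))
  refine ⟨R⟦(1 : ℤ)⟧, π, ⟨hR, ?_⟩, hbij, ?_⟩
  · -- P₀ ∈ C_{t≥0}
    obtain ⟨L', R', f₂, g₂, h₂, hT₂, hL', hR'⟩ := t.decomp (R⟦(1 : ℤ)⟧)
    have hleR' : t.le R' :=
      t.le_iso ((shiftFunctorCompIsoId C (1 : ℤ) (-1) (by omega)).app R')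
        (t.le_shift _ hR')
    -- the map P₀ ⟶ R' vanishes
    have hg₂ : g₂ = 0 := by
      have hπ : π ≫ g₂ = 0 := hP R' (Or.inl hR') _
      have hm : T'.mor₂ ≫ g₂ = 0 := by
        have := e.inv ≫= hπ
        exact (cancel_epi e.hom).1 (((Category.assoc e.hom T'.mor₂ g₂).symm.trans hπ).trans comp_zero.symm)
      obtain ⟨w, hw⟩ := Triangle.yoneda_exact₃ T' hT' g₂ hm
      have : w = 0 := horth _ _ (t.ge_shift _ hL) hleR' w
      rw [hw, this, comp_zero]; rfl
    -- hence R' ≅ 0 and f₂ is an isomorphism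
    have hR'zero : IsZero R' := by
      obtain ⟨w, hw⟩ := Triangle.yoneda_exact₃ _ hT₂ (𝟙 R') (by rw [hg₂]; exact zero_comp)
      have : w = 0 := horth _ _ hL' hleR' w
      rw [IsZero.iff_id_eq_zero, hw, this, comp_zero]; rfl
    have : IsIso f₂ :=
      (Triangle.isZero₃_iff_isIso₁ _ hT₂).1 hR'zero
    exact t.ge_iso (asIso f₂) hL'
  · -- projectivity of P₀
    intro A B Z f g h hT₂ hA hB hZ φ
    obtain ⟨_, _, hsurj⟩ := exact1 A B Z f g h hT₂ hA hB hZ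
    obtain ⟨b, hb⟩ := hsurj (π ≫ φ)
    obtain ⟨ψ, hψ⟩ := (hbij B hB).2 b
    refine ⟨ψ, (hbij Z hZ).1 ?_⟩
    show π ≫ ψ ≫ g = π ≫ φ
    rw [← Category.assoc]
    change ((fun u : R⟦(1 : ℤ)⟧ ⟶ B => π ≫ u) ψ) ≫ g = π ≫ φ
    rw [hψ, hb]
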